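/- Let X be a metric space, let k ∈ ℕ, and let ℓ₁, ℓ₂ be parallel lines in the ℓ²-product ℝᵏ ×₂ X, where ℝᵏ = EuclideanSpace ℝ (Fin k). Let π_X : ℝᵏ ×₂ X → X denote the projection onto the second factor. Then either π_X(ℓ₁) and π_X(ℓ₂) are both single points, or π_X(ℓ₁) and π_X(ℓ₂) are both lines in X and these lines are parallel. (Kleiner–Lott, 'Locally Collapsed 3-Manifolds', Sublemma 4.4, part (3).) -/

import Mathlib

set_option maxHeartbeats 1000000


/-- A line in a metric space: the image of an isometric embedding of `ℝ`. -/
def IsLine {X : Type*} [MetricSpace X] (L : Set X) : Prop :=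
  ∃ γ : ℝ → X, (∀ s t : ℝ, dist (γ s) (γ t) = |s - t|) ∧ Set.range γ = L

/-- Two lines `L₁`, `L₂` in a metric space are parallel if there is a
distance-preserving bijection of `L₁ ∪ L₂` onto the union of two parallel
lines `ℝ × {0}` and `ℝ × {a}` in the Euclidean plane, carrying `L₁` onto
`ℝ × {0}` and `L₂` onto `ℝ × {a}`. -/
def AreParallelLines {X : Type*} [MetricSpace X] (L₁ L₂ : Set X) : Prop :=
  ∃ a : ℝ, 0 ≤ a ∧ ∃ f : X → WithLp 2 (ℝ × ℝ),
    (∀ x ∈ L₁ ∪ L₂, ∀ y ∈ L₁ ∪ L₂, dist (f x) (f y) = dist x y) ∧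
    f '' L₁ = {p : WithLp 2 (ℝ × ℝ) | ((WithLp.equiv 2 (ℝ × ℝ)) p).2 = 0} ∧
    f '' L₂ = {p : WithLp 2 (ℝ × ℝ) | ((WithLp.equiv 2 (ℝ × ℝ)) p).2 = a}

open scoped RealInnerProductSpace ENNReal

section Aux

lemma kl_key {a₁ a₂ b₁ b₂ A B d₁ d₂ : ℝ} (ha₁ : 0 ≤ a₁) (ha₂ : 0 ≤ a₂) (hb₁ : 0 ≤ b₁)
    (hb₂ : 0 ≤ b₂) (hA : 0 ≤ A) (hB : 0 ≤ B) (hd₁ : 0 ≤ d₁) (hd₂ : 0 ≤ d₂)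
    (h1 : a₁^2 + b₁^2 = d₁^2) (h2 : a₂^2 + b₂^2 = d₂^2) (h3 : A^2 + B^2 = (d₁+d₂)^2)
    (htA : A ≤ a₁ + a₂) (htB : B ≤ b₁ + b₂) :
    A = a₁ + a₂ ∧ B = b₁ + b₂ ∧ b₁ * d₂ = b₂ * d₁ := by
  have hCS : a₁ * a₂ + b₁ * b₂ ≤ d₁ * d₂ := by
    nlinarith [sq_nonneg (a₁*b₂ - a₂*b₁), mul_nonneg hd₁ hd₂, mul_nonneg ha₁ ha₂,
      mul_nonneg hb₁ hb₂]
  have e1 : A^2 ≤ (a₁+a₂)^2 := by nlinarith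
  have e2 : B^2 ≤ (b₁+b₂)^2 := by nlinarith
  have e3 : (a₁+a₂)^2 + (b₁+b₂)^2 ≤ (d₁+d₂)^2 := by nlinarith
  have e4 : (a₁+a₂)^2 ≤ A^2 := by linarith
  have e5 : (b₁+b₂)^2 ≤ B^2 := by linarith
  have hA' : A = a₁ + a₂ :=
    le_antisymm htA ((pow_le_pow_iff_left₀ (by linarith) hA two_ne_zero).mp e4)
  have hB' : B = b₁ + b₂ :=
    le_antisymm htB ((pow_le_pow_iff_left₀ (by linarith) hB two_ne_zero).mp e5)
  refine ⟨hA', hB', ?_⟩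
  rw [hA', hB'] at h3
  have hCSeq : a₁*a₂ + b₁*b₂ = d₁*d₂ := by linear_combination (h3 - h1 - h2)/2
  have h4 : (a₁*b₂ - a₂*b₁)^2 = 0 := by
    linear_combination (a₂^2+b₂^2)*h1 + d₁^2*h2 - (a₁*a₂+b₁*b₂+d₁*d₂)*hCSeq
  have h4' : a₁*b₂ = a₂*b₁ := by nlinarith [h4]
  have h5 : (b₁*d₂)^2 = (b₂*d₁)^2 := by
    linear_combination (-b₁^2)*h2 + b₂^2*h1 - (a₁*b₂+a₂*b₁)*h4'
  have hu := mul_nonneg hb₁ hd₂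
  have hv := mul_nonneg hb₂ hd₁
  exact le_antisymm ((pow_le_pow_iff_left₀ hu hv two_ne_zero).mp h5.le)
    ((pow_le_pow_iff_left₀ hv hu two_ne_zero).mp h5.ge)

lemma kl_leading {A B D A' B' D' T : ℝ}
    (h : ∀ x : ℝ, T ≤ x → A' * x^2 + B' * x + D' ≤ A * x^2 + B * x + D) : A' ≤ A := by
  by_contra hc
  push_neg at hc
  have hδ0 : 0 < A' - A := by linarith
  set x := max T (max 1 ((|B - B'| + |D - D'| + 1) / (A' - A))) with hx
  have hx1 : (1:ℝ) ≤ x := le_trans (le_max_left _ _) (le_max_right _ _)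
  have hxT : T ≤ x := le_max_left _ _
  have hxq : (|B - B'| + |D - D'| + 1) / (A' - A) ≤ x :=
    le_trans (le_max_right _ _) (le_max_right _ _)
  have hxd : |B - B'| + |D - D'| + 1 ≤ (A' - A) * x := by
    rw [div_le_iff₀ hδ0] at hxq; linarith
  have h2 := h x hxT
  nlinarith [le_abs_self (B - B'), le_abs_self (D - D'), abs_nonneg (B - B'), abs_nonneg (D - D'),
    mul_le_mul_of_nonneg_left hxd (le_of_lt (lt_of_lt_of_le zero_lt_one hx1))]

lemma kl_dist_sq {α β : Type*} [PseudoMetricSpace α] [PseudoMetricSpace β]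
    (x y : WithLp 2 (α × β)) :
    dist x y ^ 2 = dist x.fst y.fst ^ 2 + dist x.snd y.snd ^ 2 := by
  rw [WithLp.prod_dist_eq_add (by norm_num)]
  have h2 : ((2:ℝ≥0∞)).toReal = (2:ℝ) := by norm_num
  rw [h2, ← Real.rpow_natCast _ 2, ← Real.rpow_mul (by positivity)]
  norm_num

lemma kl_dist_sqrt {α β : Type*} [PseudoMetricSpace α] [PseudoMetricSpace β]
    (x y : WithLp 2 (α × β)) :
    dist x y = Real.sqrt (dist x.fst y.fst ^ 2 + dist x.snd y.snd ^ 2) := by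
  rw [← kl_dist_sq, Real.sqrt_sq dist_nonneg]

variable {E : Type*} [NormedAddCommGroup E] [InnerProductSpace ℝ E]

lemma kl_expand (w u₁ u₂ : E) (s t : ℝ) :
    ‖w + s • u₁ - t • u₂‖^2 = ‖w‖^2 + s^2*‖u₁‖^2 + t^2*‖u₂‖^2
      + 2*s*⟪w,u₁⟫ - 2*t*⟪w,u₂⟫ - 2*s*t*⟪u₁,u₂⟫ := by
  simp only [norm_sub_sq_real, norm_add_sq_real, real_inner_smul_left, real_inner_smul_right,
    inner_add_left, inner_add_right, norm_smul, Real.norm_eq_abs, mul_pow, sq_abs]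
  ring

lemma kl_mixed_contra (u₁ u₂ w : E) (a β : ℝ)
    (h1 : ‖u₁‖^2 = 1) (h2 : ‖u₂‖^2 = 1 - β^2) (hβ : 0 < β)
    (D : ℝ → ℝ) (hD : ∀ s t : ℝ, (D t)^2 = (s-t)^2 + a^2 - ‖w + s • u₁ - t • u₂‖^2) :
    False := by
  have e00 := hD 0 0
  have e10 := hD 1 0
  have e01 := hD 0 1
  have e11 := hD 1 1
  rw [kl_expand] at e00 e10 e01 e11
  have hW1 : ⟪w,u₁⟫ = 0 := by linarith
  have hP : ⟪u₁,u₂⟫ = 1 := by linarith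
  have hn1 : ‖u₁‖ = 1 := by nlinarith [norm_nonneg u₁]
  have hn2 : ‖u₂‖ < 1 := by nlinarith [norm_nonneg u₂]
  have := real_inner_le_norm u₁ u₂
  rw [hP, hn1] at this
  linarith

lemma kl_line_structure {X : Type*} [MetricSpace X] (γ : ℝ → WithLp 2 (E × X))
    (hγ : ∀ s t : ℝ, dist (γ s) (γ t) = |s - t|) :
    ∃ (β : ℝ) (u : E), 0 ≤ β ∧ β ≤ 1 ∧ ‖u‖^2 = 1 - β^2 ∧
      (∀ t : ℝ, (γ t).fst = (γ 0).fst + t • u) ∧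
      (∀ s t : ℝ, dist (γ s).snd (γ t).snd = β * |s - t|) := by
  set f : ℝ → E := fun t => (γ t).fst with hfdef
  set g : ℝ → X := fun t => (γ t).snd with hgdef
  have hsum : ∀ s t : ℝ, dist (f s) (f t)^2 + dist (g s) (g t)^2 = (s - t)^2 := by
    intro s t
    have h := kl_dist_sq (γ s) (γ t)
    rw [hγ s t, sq_abs] at h
    exact h.symm
  have hkey : ∀ s u t : ℝ, s ≤ u → u ≤ t →
      dist (f s) (f t) = dist (f s) (f u) + dist (f u) (f t) ∧
      dist (g s) (g t) = dist (g s) (g u) + dist (g u) (g t) ∧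
      dist (g s) (g u) * (t - u) = dist (g u) (g t) * (u - s) := by
    intro s u t hsu hut
    have h1 := hsum s u
    have h2 := hsum u t
    have h3 := hsum s t
    rw [show (s-u)^2 = (u-s)^2 by ring] at h1
    rw [show (u-t)^2 = (t-u)^2 by ring] at h2
    rw [show (s-t)^2 = ((u-s) + (t-u))^2 by ring] at h3
    exact kl_key dist_nonneg dist_nonneg dist_nonneg dist_nonneg dist_nonneg dist_nonneg
      (by linarith) (by linarith) h1 h2 h3 (dist_triangle _ _ _) (dist_triangle _ _ _)
  set β := dist (g 0) (g 1) with hβdef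
  have hr : ∀ x y z : ℝ, x < y → y < z →
      dist (g x) (g y) * (z - x) = dist (g x) (g z) * (y - x) := by
    intro x y z hxy hyz
    obtain ⟨-, hadd, hprop⟩ := hkey x y z hxy.le hyz.le
    rw [hadd]; linear_combination hprop
  have hr2 : ∀ x y z : ℝ, x < y → y < z →
      dist (g y) (g z) * (z - x) = dist (g x) (g z) * (z - y) := by
    intro x y z hxy hyz
    obtain ⟨-, hadd, hprop⟩ := hkey x y z hxy.le hyz.le
    rw [hadd]; linear_combination -hprop
  have hglin : ∀ s t : ℝ, s < t → dist (g s) (g t) = β * (t - s) := by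
    intro s t hst
    set m := min s 0 - 1 with hm
    set M := max t 1 + 1 with hM
    have hms : m < s := by rw [hm]; linarith [min_le_left s 0]
    have hm0 : m < 0 := by rw [hm]; linarith [min_le_right s 0]
    have htM : t < M := by rw [hM]; linarith [le_max_left t 1]
    have h1M : (1:ℝ) < M := by rw [hM]; linarith [le_max_right t 1]
    have hMm : (0:ℝ) < M - m := by linarith
    have hMs : (0:ℝ) < M - s := by linarith
    have hM0 : (0:ℝ) < M := by linarith
    have c1 : dist (g s) (g t) * (M - s) = dist (g s) (g M) * (t - s) := hr s t M hst htM
    have c2 : dist (g s) (g M) * (M - m) = dist (g m) (g M) * (M - s) :=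
      hr2 m s M hms (hst.trans htM)
    have c4 : dist (g s) (g t) * (M - m) = dist (g m) (g M) * (t - s) :=
      mul_right_cancel₀ hMs.ne' (by linear_combination (M - m) * c1 + (t - s) * c2)
    have c5 : β * (M - 0) = dist (g 0) (g M) * (1 - 0) := hr 0 1 M zero_lt_one h1M
    have c6 : dist (g 0) (g M) * (M - m) = dist (g m) (g M) * (M - 0) := hr2 m 0 M hm0 hM0
    have c8 : β * (M - m) = dist (g m) (g M) :=
      mul_right_cancel₀ hM0.ne' (by linear_combination (M - m) * c5 + c6)
    exact mul_right_cancel₀ hMm.ne' (by linear_combination c4 - (t - s) * c8)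
  have hg : ∀ s t : ℝ, dist (g s) (g t) = β * |s - t| := by
    intro s t
    rcases lt_trichotomy s t with h | h | h
    · rw [abs_of_nonpos (by linarith), hglin s t h]; ring
    · simp [h]
    · rw [abs_of_nonneg (by linarith), dist_comm, hglin t s h]
  have hβ0 : 0 ≤ β := dist_nonneg
  have hβ1 : β ≤ 1 := by
    have h := hsum 0 1
    rw [hg 0 1] at h
    norm_num at h
    nlinarith [dist_nonneg (x := f 0) (y := f 1)]
  have hfd : ∀ s t : ℝ, ‖f s - f t‖^2 = (1 - β^2) * (s - t)^2 := by
    intro s t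
    have h1 := hsum s t
    rw [hg s t, mul_pow, sq_abs] at h1
    rw [← dist_eq_norm]
    linarith [h1]
  set u := f 1 - f 0 with hu
  have hun : ‖u‖^2 = 1 - β^2 := by
    have := hfd 1 0
    simpa using this
  have hinner : ∀ t : ℝ, ⟪f t - f 0, u⟫ = (1 - β^2) * t := by
    intro t
    have hx : ‖f t - f 0‖^2 = (1-β^2) * t^2 := by simpa using hfd t 0
    have hxy : ‖(f t - f 0) - u‖^2 = (1-β^2) * (t-1)^2 := by
      rw [show (f t - f 0) - u = f t - f 1 by rw [hu]; abel]
      exact hfd t 1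
    have hexp : ‖(f t - f 0) - u‖^2 = ‖f t - f 0‖^2 - 2 * ⟪f t - f 0, u⟫ + ‖u‖^2 :=
      norm_sub_sq_real _ _
    rw [hx, hun, hxy] at hexp
    linear_combination hexp / 2
  have hfaff : ∀ t : ℝ, f t = f 0 + t • u := by
    intro t
    have hx : ‖f t - f 0‖^2 = (1-β^2) * t^2 := by simpa using hfd t 0
    have hz : ‖(f t - f 0) - t • u‖^2 = 0 := by
      rw [norm_sub_sq_real, inner_smul_right, hinner t, norm_smul, mul_pow,
        Real.norm_eq_abs, sq_abs, hun, hx]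
      ring
    have h0 : (f t - f 0) - t • u = 0 :=
      norm_eq_zero.mp (pow_eq_zero_iff two_ne_zero |>.mp hz)
    have h1 := sub_eq_zero.mp h0
    rw [sub_eq_iff_eq_add] at h1
    rw [h1]; abel
  exact ⟨β, u, hβ0, hβ1, hun, hfaff, hg⟩

lemma kl_plane_dist (p q : ℝ × ℝ) :
    dist ((WithLp.equiv 2 (ℝ × ℝ)).symm p) ((WithLp.equiv 2 (ℝ × ℝ)).symm q)
      = Real.sqrt ((p.1-q.1)^2 + (p.2-q.2)^2) := by
  rw [kl_dist_sqrt]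
  simp only [WithLp.equiv_symm_apply, WithLp.toLp_fst, WithLp.toLp_snd, Real.dist_eq, sq_abs]

lemma kl_parallel_of_param {X : Type*} [MetricSpace X] (h₁ h₂ : ℝ → X) (a : ℝ) (ha : 0 ≤ a)
    (d11 : ∀ s t : ℝ, dist (h₁ s) (h₁ t) = |s - t|)
    (d22 : ∀ s t : ℝ, dist (h₂ s) (h₂ t) = |s - t|)
    (d12 : ∀ s t : ℝ, dist (h₁ s) (h₂ t) = Real.sqrt ((s-t)^2 + a^2)) :
    AreParallelLines (Set.range h₁) (Set.range h₂) := by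
  classical
  have hinj1 : ∀ x y : ℝ, h₁ x = h₁ y → x = y := by
    intro x y h
    have hd := d11 x y
    rw [h, dist_self] at hd
    exact sub_eq_zero.mp (abs_eq_zero.mp hd.symm)
  have hinj2 : ∀ x y : ℝ, h₂ x = h₂ y → x = y := by
    intro x y h
    have hd := d22 x y
    rw [h, dist_self] at hd
    exact sub_eq_zero.mp (abs_eq_zero.mp hd.symm)
  have hcross : ∀ s t : ℝ, h₁ s = h₂ t → s = t ∧ a = 0 := by
    intro s t h
    have hd := d12 s t
    rw [h, dist_self] at hd
    have h0 : (s-t)^2 + a^2 = 0 := by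
      have hnn : 0 ≤ (s-t)^2 + a^2 := by positivity
      have := Real.sqrt_eq_zero hnn |>.mp hd.symm
      linarith
    have hst : (s-t)^2 = 0 := by nlinarith [sq_nonneg (s-t), sq_nonneg a]
    have ha0 : a^2 = 0 := by nlinarith [sq_nonneg (s-t), sq_nonneg a]
    exact ⟨by nlinarith [hst], by nlinarith [ha0]⟩
  set e := WithLp.equiv 2 (ℝ × ℝ) with he
  set F : X → WithLp 2 (ℝ × ℝ) := fun x =>
    if h : ∃ s, h₁ s = x then e.symm (h.choose, 0)
    else if h' : ∃ t, h₂ t = x then e.symm (h'.choose, a)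
    else e.symm (0,0) with hF
  have hF1 : ∀ s : ℝ, F (h₁ s) = e.symm (s, 0) := by
    intro s
    have hex : ∃ s', h₁ s' = h₁ s := ⟨s, rfl⟩
    rw [hF]
    simp only
    rw [dif_pos hex, hinj1 _ _ hex.choose_spec]
  have hF2 : ∀ t : ℝ, F (h₂ t) = e.symm (t, a) := by
    intro t
    have hex2 : ∃ t', h₂ t' = h₂ t := ⟨t, rfl⟩
    rw [hF]
    simp only
    by_cases hex : ∃ s, h₁ s = h₂ t
    · rw [dif_pos hex]
      obtain ⟨hst, ha0⟩ := hcross hex.choose t hex.choose_spec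
      rw [hst, ha0]
    · rw [dif_neg hex, dif_pos hex2, hinj2 _ _ hex2.choose_spec]
  refine ⟨a, ha, F, ?_, ?_, ?_⟩
  · rintro x (⟨s, rfl⟩ | ⟨s, rfl⟩) y (⟨t, rfl⟩ | ⟨t, rfl⟩)
    · rw [hF1, hF1, kl_plane_dist, d11]
      norm_num [Real.sqrt_sq_eq_abs]
    · rw [hF1, hF2, kl_plane_dist, d12]
      congr 1
      ring
    · rw [hF2, hF1, kl_plane_dist, dist_comm (h₂ s) (h₁ t), d12]
      congr 1
      ring
    · rw [hF2, hF2, kl_plane_dist, d22]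
      norm_num [Real.sqrt_sq_eq_abs]
  · ext p
    simp only [Set.mem_image, Set.mem_setOf_eq]
    constructor
    · rintro ⟨x, ⟨s, rfl⟩, rfl⟩
      rw [hF1]
      simp [he]
    · intro hp
      refine ⟨h₁ (e p).1, ⟨(e p).1, rfl⟩, ?_⟩
      rw [hF1]
      have h2 : ((e p).1, (0:ℝ)) = e p := by rw [← hp]
      rw [h2]
      exact e.symm_apply_apply p
  · ext p
    simp only [Set.mem_image, Set.mem_setOf_eq]
    constructor
    · rintro ⟨x, ⟨t, rfl⟩, rfl⟩
      rw [hF2]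
      simp [he]
    · intro hp
      refine ⟨h₂ (e p).1, ⟨(e p).1, rfl⟩, ?_⟩
      rw [hF2]
      have h2 : ((e p).1, a) = e p := by rw [← hp]
      rw [h2]
      exact e.symm_apply_apply p

end Aux

/-- Kleiner–Lott, "Locally Collapsed 3-Manifolds", Sublemma 4.4(3): the
projections to `X` of two parallel lines in `ℝᵏ ×₂ X` are either both points
or both lines, and in the latter case they are parallel lines in `X`. -/
theorem proj_of_parallel_lines {X : Type*} [MetricSpace X] (k : ℕ)
    (L₁ L₂ : Set (WithLp 2 (EuclideanSpace ℝ (Fin k) × X)))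
    (h₁ : IsLine L₁) (h₂ : IsLine L₂) (hpar : AreParallelLines L₁ L₂) :
    ((∃ x₁ : X,
        (fun p : WithLp 2 (EuclideanSpace ℝ (Fin k) × X) =>
            ((WithLp.equiv 2 (EuclideanSpace ℝ (Fin k) × X)) p).2) '' L₁ = {x₁}) ∧
      (∃ x₂ : X,
        (fun p : WithLp 2 (EuclideanSpace ℝ (Fin k) × X) =>
            ((WithLp.equiv 2 (EuclideanSpace ℝ (Fin k) × X)) p).2) '' L₂ = {x₂})) ∨
    (IsLine ((fun p : WithLp 2 (EuclideanSpace ℝ (Fin k) × X) =>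
          ((WithLp.equiv 2 (EuclideanSpace ℝ (Fin k) × X)) p).2) '' L₁) ∧
      IsLine ((fun p : WithLp 2 (EuclideanSpace ℝ (Fin k) × X) =>
          ((WithLp.equiv 2 (EuclideanSpace ℝ (Fin k) × X)) p).2) '' L₂) ∧
      AreParallelLines
        ((fun p : WithLp 2 (EuclideanSpace ℝ (Fin k) × X) =>
            ((WithLp.equiv 2 (EuclideanSpace ℝ (Fin k) × X)) p).2) '' L₁)
        ((fun p : WithLp 2 (EuclideanSpace ℝ (Fin k) × X) =>
            ((WithLp.equiv 2 (EuclideanSpace ℝ (Fin k) × X)) p).2) '' L₂)) := by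
  classical
  obtain ⟨a, ha, f, hf, hfL₁, hfL₂⟩ := hpar
  have hfinj : ∀ x ∈ L₁ ∪ L₂, ∀ y ∈ L₁ ∪ L₂, f x = f y → x = y := by
    intro x hx y hy h
    have h2 := hf x hx y hy
    rw [h, dist_self] at h2
    exact dist_eq_zero.mp h2.symm
  have hex1 : ∀ s : ℝ, ∃ x, x ∈ L₁ ∧ f x = (WithLp.equiv 2 (ℝ × ℝ)).symm (s, 0) := by
    intro s
    have hmem : (WithLp.equiv 2 (ℝ × ℝ)).symm (s, 0) ∈ f '' L₁ := by
      rw [hfL₁]; simp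
    obtain ⟨x, hx1, hx2⟩ := hmem
    exact ⟨x, hx1, hx2⟩
  have hex2 : ∀ t : ℝ, ∃ x, x ∈ L₂ ∧ f x = (WithLp.equiv 2 (ℝ × ℝ)).symm (t, a) := by
    intro t
    have hmem : (WithLp.equiv 2 (ℝ × ℝ)).symm (t, a) ∈ f '' L₂ := by
      rw [hfL₂]; simp
    obtain ⟨x, hx1, hx2⟩ := hmem
    exact ⟨x, hx1, hx2⟩
  choose γ₁ hγ₁L hγ₁f using hex1
  choose γ₂ hγ₂L hγ₂f using hex2
  have hd1 : ∀ s t : ℝ, dist (γ₁ s) (γ₁ t) = |s - t| := by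
    intro s t
    rw [← hf _ (Or.inl (hγ₁L s)) _ (Or.inl (hγ₁L t)), hγ₁f, hγ₁f, kl_plane_dist]
    norm_num [Real.sqrt_sq_eq_abs]
  have hd2 : ∀ s t : ℝ, dist (γ₂ s) (γ₂ t) = |s - t| := by
    intro s t
    rw [← hf _ (Or.inr (hγ₂L s)) _ (Or.inr (hγ₂L t)), hγ₂f, hγ₂f, kl_plane_dist]
    norm_num [Real.sqrt_sq_eq_abs]
  have hd12 : ∀ s t : ℝ, dist (γ₁ s) (γ₂ t) = Real.sqrt ((s - t)^2 + a^2) := by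
    intro s t
    rw [← hf _ (Or.inl (hγ₁L s)) _ (Or.inr (hγ₂L t)), hγ₁f, hγ₂f, kl_plane_dist]
    congr 1
    ring
  have hr1 : Set.range γ₁ = L₁ := by
    apply Set.Subset.antisymm
    · rintro _ ⟨s, rfl⟩
      exact hγ₁L s
    · intro x hx
      have hmem : f x ∈ f '' L₁ := ⟨x, hx, rfl⟩
      rw [hfL₁] at hmem
      refine ⟨((WithLp.equiv 2 (ℝ × ℝ)) (f x)).1, ?_⟩
      apply hfinj _ (Or.inl (hγ₁L _)) _ (Or.inl hx)
      rw [hγ₁f]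
      have h2 : (((WithLp.equiv 2 (ℝ × ℝ)) (f x)).1, (0:ℝ)) = (WithLp.equiv 2 (ℝ × ℝ)) (f x) := by
        rw [← hmem]
      rw [h2, Equiv.symm_apply_apply]
  have hr2 : Set.range γ₂ = L₂ := by
    apply Set.Subset.antisymm
    · rintro _ ⟨t, rfl⟩
      exact hγ₂L t
    · intro x hx
      have hmem : f x ∈ f '' L₂ := ⟨x, hx, rfl⟩
      rw [hfL₂] at hmem
      refine ⟨((WithLp.equiv 2 (ℝ × ℝ)) (f x)).1, ?_⟩
      apply hfinj _ (Or.inr (hγ₂L _)) _ (Or.inr hx)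
      rw [hγ₂f]
      have h2 : (((WithLp.equiv 2 (ℝ × ℝ)) (f x)).1, a) = (WithLp.equiv 2 (ℝ × ℝ)) (f x) := by
        rw [← hmem]
      rw [h2, Equiv.symm_apply_apply]
  obtain ⟨β₁, u₁, hβ₁0, hβ₁1, hu₁, haff₁, hg₁⟩ := kl_line_structure γ₁ hd1
  obtain ⟨β₂, u₂, hβ₂0, hβ₂1, hu₂, haff₂, hg₂⟩ := kl_line_structure γ₂ hd2
  have him1 : (fun p : WithLp 2 (EuclideanSpace ℝ (Fin k) × X) =>
      ((WithLp.equiv 2 (EuclideanSpace ℝ (Fin k) × X)) p).2) '' L₁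
      = Set.range (fun s : ℝ => (γ₁ s).snd) := by
    rw [← hr1, ← Set.range_comp]
    rfl
  have him2 : (fun p : WithLp 2 (EuclideanSpace ℝ (Fin k) × X) =>
      ((WithLp.equiv 2 (EuclideanSpace ℝ (Fin k) × X)) p).2) '' L₂
      = Set.range (fun t : ℝ => (γ₂ t).snd) := by
    rw [← hr2, ← Set.range_comp]
    rfl
  have hcross : ∀ s t : ℝ, dist (γ₁ s).snd (γ₂ t).snd ^ 2
      = (s-t)^2 + a^2 - ‖((γ₁ 0).fst - (γ₂ 0).fst) + s • u₁ - t • u₂‖^2 := by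
    intro s t
    have h := kl_dist_sq (γ₁ s) (γ₂ t)
    have h' : dist (γ₁ s) (γ₂ t)^2 = (s-t)^2 + a^2 := by
      rw [hd12 s t, Real.sq_sqrt (by positivity)]
    rw [h'] at h
    have hfst : dist (γ₁ s).fst (γ₂ t).fst ^ 2
        = ‖((γ₁ 0).fst - (γ₂ 0).fst) + s • u₁ - t • u₂‖^2 := by
      rw [dist_eq_norm, haff₁ s, haff₂ t]
      congr 1
      abel
    rw [hfst] at h
    linarith
  rcases eq_or_lt_of_le hβ₁0 with hβ₁z | hβ₁pos
  · have hconst1 : ∀ s : ℝ, (γ₁ s).snd = (γ₁ 0).snd := by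
      intro s
      have h0 : dist (γ₁ s).snd (γ₁ 0).snd = 0 := by rw [hg₁ s 0, ← hβ₁z]; ring
      exact dist_eq_zero.mp h0
    rcases eq_or_lt_of_le hβ₂0 with hβ₂z | hβ₂pos
    · left
      have hconst2 : ∀ s : ℝ, (γ₂ s).snd = (γ₂ 0).snd := by
        intro s
        have h0 : dist (γ₂ s).snd (γ₂ 0).snd = 0 := by rw [hg₂ s 0, ← hβ₂z]; ring
        exact dist_eq_zero.mp h0
      constructor
      · refine ⟨(γ₁ 0).snd, ?_⟩
        rw [him1]
        ext x
        simp only [Set.mem_range, Set.mem_singleton_iff]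
        constructor
        · rintro ⟨s, rfl⟩
          exact hconst1 s
        · intro h
          exact ⟨0, h.symm⟩
      · refine ⟨(γ₂ 0).snd, ?_⟩
        rw [him2]
        ext x
        simp only [Set.mem_range, Set.mem_singleton_iff]
        constructor
        · rintro ⟨t, rfl⟩
          exact hconst2 t
        · intro h
          exact ⟨0, h.symm⟩
    · exfalso
      refine kl_mixed_contra u₁ u₂ ((γ₁ 0).fst - (γ₂ 0).fst) a β₂ ?_ hu₂ hβ₂pos
        (fun t => dist (γ₁ 0).snd (γ₂ t).snd) ?_
      · rw [hu₁, ← hβ₁z]; norm_num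
      · intro s t
        have h := hcross s t
        rw [hconst1 s] at h
        exact h
  · rcases eq_or_lt_of_le hβ₂0 with hβ₂z | hβ₂pos
    · exfalso
      have hconst2 : ∀ s : ℝ, (γ₂ s).snd = (γ₂ 0).snd := by
        intro s
        have h0 : dist (γ₂ s).snd (γ₂ 0).snd = 0 := by rw [hg₂ s 0, ← hβ₂z]; ring
        exact dist_eq_zero.mp h0
      refine kl_mixed_contra u₂ u₁ ((γ₂ 0).fst - (γ₁ 0).fst) a β₁ ?_ hu₁ hβ₁pos
        (fun t => dist (γ₁ t).snd (γ₂ 0).snd) ?_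
      · rw [hu₂, ← hβ₂z]; norm_num
      · intro s t
        show dist (γ₁ t).snd (γ₂ 0).snd ^ 2 = _
        have h := hcross t s
        rw [hconst2 s] at h
        rw [h]
        have hn : ‖((γ₁ 0).fst - (γ₂ 0).fst) + t • u₁ - s • u₂‖
            = ‖((γ₂ 0).fst - (γ₁ 0).fst) + s • u₂ - t • u₁‖ := by
          rw [← norm_neg]
          congr 1
          abel
        rw [hn]
        ring
    · -- both positive: main case
      right
      have hq : ∀ x : ℝ, dist (γ₁ x).snd (γ₂ x).snd ^ 2
          = (β₁^2 + β₂^2 - 2*(1 - ⟪u₁, u₂⟫)) * x^2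
            + (2*⟪(γ₁ 0).fst - (γ₂ 0).fst, u₂⟫ - 2*⟪(γ₁ 0).fst - (γ₂ 0).fst, u₁⟫) * x
            + (a^2 - ‖(γ₁ 0).fst - (γ₂ 0).fst‖^2) := by
        intro x
        rw [hcross x x, kl_expand, hu₁, hu₂]
        ring
      have hlow : ∀ x : ℝ, 0 ≤ x →
          |β₁ - β₂| * x - dist (γ₁ 0).snd (γ₂ 0).snd ≤ dist (γ₁ x).snd (γ₂ x).snd := by
        intro x hx
        have e1 : dist (γ₁ x).snd (γ₁ 0).snd = β₁ * x := by
          rw [hg₁ x 0, sub_zero, abs_of_nonneg hx]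
        have e2 : dist (γ₂ x).snd (γ₂ 0).snd = β₂ * x := by
          rw [hg₂ x 0, sub_zero, abs_of_nonneg hx]
        have t1 := dist_triangle4 (γ₁ x).snd (γ₂ x).snd (γ₂ 0).snd (γ₁ 0).snd
        have t2 := dist_triangle4 (γ₂ x).snd (γ₁ x).snd (γ₁ 0).snd (γ₂ 0).snd
        rw [e1] at t1
        rw [e2, dist_comm (γ₂ x).snd (γ₁ x).snd] at t2
        rw [dist_comm (γ₂ 0).snd (γ₁ 0).snd] at t1
        rcases le_total β₁ β₂ with hb | hb
        · rw [abs_of_nonpos (by linarith)]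
          linarith
        · rw [abs_of_nonneg (by linarith)]
          linarith
      have hAA : (β₁ - β₂)^2 ≤ β₁^2 + β₂^2 - 2*(1 - ⟪u₁, u₂⟫) := by
        rcases eq_or_ne β₁ β₂ with heq | hne
        · have h0 : (0:ℝ) ≤ β₁^2 + β₂^2 - 2*(1 - ⟪u₁, u₂⟫) := by
            refine kl_leading (A' := 0) (B' := 0) (D' := 0) (T := 0)
              (B := 2*⟪(γ₁ 0).fst - (γ₂ 0).fst, u₂⟫ - 2*⟪(γ₁ 0).fst - (γ₂ 0).fst, u₁⟫)
              (D := a^2 - ‖(γ₁ 0).fst - (γ₂ 0).fst‖^2) (fun x hx => ?_)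
            have h1 := sq_nonneg (dist (γ₁ x).snd (γ₂ x).snd)
            rw [hq x] at h1
            linarith
          have hz : (β₁ - β₂)^2 = 0 := by rw [heq]; ring
          linarith [h0]
        · have hb : 0 < |β₁ - β₂| := abs_pos.mpr (sub_ne_zero.mpr hne)
          have hC0 : 0 ≤ dist (γ₁ 0).snd (γ₂ 0).snd := dist_nonneg
          have hlead : |β₁ - β₂|^2 ≤ β₁^2 + β₂^2 - 2*(1 - ⟪u₁, u₂⟫) := by
            refine kl_leading (A' := |β₁ - β₂|^2)
              (B' := -(2 * |β₁ - β₂| * dist (γ₁ 0).snd (γ₂ 0).snd))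
              (D' := dist (γ₁ 0).snd (γ₂ 0).snd ^ 2)
              (B := 2*⟪(γ₁ 0).fst - (γ₂ 0).fst, u₂⟫ - 2*⟪(γ₁ 0).fst - (γ₂ 0).fst, u₁⟫)
              (D := a^2 - ‖(γ₁ 0).fst - (γ₂ 0).fst‖^2)
              (T := (2*dist (γ₁ 0).snd (γ₂ 0).snd + 1)/|β₁ - β₂|) (fun x hx => ?_)
            have hxpos : (0:ℝ) ≤ x := le_trans (by positivity) hx
            have h1 : 2*dist (γ₁ 0).snd (γ₂ 0).snd + 1 ≤ |β₁ - β₂| * x := by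
              rw [div_le_iff₀ hb] at hx
              linarith
            have h2 := hlow x hxpos
            have h3 : 0 ≤ |β₁ - β₂| * x - dist (γ₁ 0).snd (γ₂ 0).snd := by linarith
            have h4 : (|β₁ - β₂| * x - dist (γ₁ 0).snd (γ₂ 0).snd)^2
                ≤ dist (γ₁ x).snd (γ₂ x).snd ^ 2 := by
              nlinarith [dist_nonneg (x := (γ₁ x).snd) (y := (γ₂ x).snd)]
            rw [hq x] at h4
            have h5 : |β₁ - β₂|^2 * x^2 + -(2 * |β₁ - β₂| * dist (γ₁ 0).snd (γ₂ 0).snd) * x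
                + dist (γ₁ 0).snd (γ₂ 0).snd ^ 2
                = (|β₁ - β₂| * x - dist (γ₁ 0).snd (γ₂ 0).snd)^2 := by ring
            rw [h5]
            exact h4
          rw [← sq_abs]
          exact hlead
      have hinn_low : 1 - β₁*β₂ ≤ ⟪u₁, u₂⟫ := by nlinarith [hAA]
      have hCS := real_inner_le_norm u₁ u₂
      have h5 : 1 - β₁*β₂ ≤ ‖u₁‖*‖u₂‖ := hinn_low.trans hCS
      have h6 : (0:ℝ) ≤ 1 - β₁*β₂ := by nlinarith
      have h7 : (1 - β₁*β₂)^2 ≤ (‖u₁‖*‖u₂‖)^2 := by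
        nlinarith [mul_nonneg (norm_nonneg u₁) (norm_nonneg u₂)]
      rw [mul_pow, hu₁, hu₂] at h7
      have h8 : (β₁ - β₂)^2 ≤ 0 := by nlinarith
      have hb12 : β₁ = β₂ := by
        have h9 : (β₁ - β₂)^2 = 0 := le_antisymm h8 (sq_nonneg _)
        have := pow_eq_zero_iff two_ne_zero |>.mp h9
        linarith
      have hinn_eq : ⟪u₁, u₂⟫ = 1 - β₂^2 := by
        have hup : ⟪u₁, u₂⟫ ≤ 1 - β₂^2 := by
          have hn12 : ‖u₁‖ = ‖u₂‖ := by
            have hsq : ‖u₁‖^2 = ‖u₂‖^2 := by rw [hu₁, hu₂, hb12]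
            exact le_antisymm
              ((pow_le_pow_iff_left₀ (norm_nonneg u₁) (norm_nonneg u₂) two_ne_zero).mp hsq.le)
              ((pow_le_pow_iff_left₀ (norm_nonneg u₂) (norm_nonneg u₁) two_ne_zero).mp hsq.ge)
          calc ⟪u₁, u₂⟫ ≤ ‖u₁‖*‖u₂‖ := hCS
            _ = ‖u₂‖^2 := by rw [hn12]; ring
            _ = 1 - β₂^2 := hu₂
        have hlo : 1 - β₂^2 ≤ ⟪u₁, u₂⟫ := by
          rw [hb12] at hinn_low
          calc (1:ℝ) - β₂^2 = 1 - β₂*β₂ := by ring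
            _ ≤ ⟪u₁, u₂⟫ := hinn_low
        exact le_antisymm hup hlo
      have huu : u₁ = u₂ := by
        have h9 : ‖u₁ - u₂‖^2 = 0 := by
          rw [norm_sub_sq_real, hu₁, hu₂, hinn_eq, hb12]
          ring
        exact sub_eq_zero.mp (norm_eq_zero.mp (pow_eq_zero_iff two_ne_zero |>.mp h9))
      have hq2 : ∀ s t : ℝ, dist (γ₁ s).snd (γ₂ t).snd ^ 2
          = β₂^2*(s-t)^2 - 2*(s-t)*⟪(γ₁ 0).fst - (γ₂ 0).fst, u₂⟫
            + (a^2 - ‖(γ₁ 0).fst - (γ₂ 0).fst‖^2) := by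
        intro s t
        have h := hcross s t
        rw [huu] at h
        rw [h, kl_expand, real_inner_self_eq_norm_sq, hu₂]
        ring
      set W := ⟪(γ₁ 0).fst - (γ₂ 0).fst, u₂⟫ with hW
      set ee := a^2 - ‖(γ₁ 0).fst - (γ₂ 0).fst‖^2 with hee
      have hβ₂ne : β₂ ≠ 0 := hβ₂pos.ne'
      have hdisc : 0 ≤ ee - W^2/β₂^2 := by
        have h := hq2 (W/β₂^2) 0
        have h2 := sq_nonneg (dist (γ₁ (W/β₂^2)).snd (γ₂ 0).snd)
        rw [h] at h2
        have h3 : β₂^2*(W/β₂^2 - 0)^2 - 2*(W/β₂^2 - 0)*W + ee = ee - W^2/β₂^2 := by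
          field_simp
          ring
        rw [h3] at h2
        exact h2
      set a' := Real.sqrt (ee - W^2/β₂^2) with ha'def
      have ha'0 : 0 ≤ a' := Real.sqrt_nonneg _
      have ha'sq : a'^2 = ee - W^2/β₂^2 := Real.sq_sqrt hdisc
      set p₁ : ℝ → X := fun s => (γ₁ (s/β₂)).snd with hp₁
      set p₂ : ℝ → X := fun t => (γ₂ (t/β₂ - W/β₂^2)).snd with hp₂
      have hscale : ∀ s t : ℝ, β₂ * |s/β₂ - t/β₂| = |s - t| := by
        intro s t
        rw [show s/β₂ - t/β₂ = (s-t)/β₂ by ring, abs_div, abs_of_pos hβ₂pos]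
        field_simp
      have hd11' : ∀ s t : ℝ, dist (p₁ s) (p₁ t) = |s - t| := by
        intro s t
        rw [hp₁]
        simp only
        rw [hg₁, hb12, hscale]
      have hd22' : ∀ s t : ℝ, dist (p₂ s) (p₂ t) = |s - t| := by
        intro s t
        rw [hp₂]
        simp only
        rw [hg₂, show (s/β₂ - W/β₂^2) - (t/β₂ - W/β₂^2) = s/β₂ - t/β₂ by ring, hscale]
      have hd12' : ∀ s t : ℝ, dist (p₁ s) (p₂ t) = Real.sqrt ((s-t)^2 + a'^2) := by
        intro s t
        have hsq : dist (p₁ s) (p₂ t)^2 = (s-t)^2 + a'^2 := by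
          rw [hp₁, hp₂]
          simp only
          rw [hq2, ha'sq]
          field_simp
          ring
        rw [← hsq, Real.sqrt_sq dist_nonneg]
      have hrange1 : Set.range p₁ = Set.range (fun s : ℝ => (γ₁ s).snd) := by
        ext x
        constructor
        · rintro ⟨s, rfl⟩
          exact ⟨s/β₂, rfl⟩
        · rintro ⟨s, rfl⟩
          refine ⟨β₂*s, ?_⟩
          rw [hp₁]
          simp only
          rw [mul_div_cancel_left₀ s hβ₂ne]
      have hrange2 : Set.range p₂ = Set.range (fun t : ℝ => (γ₂ t).snd) := by
        ext x
        constructor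
        · rintro ⟨t, rfl⟩
          exact ⟨t/β₂ - W/β₂^2, rfl⟩
        · rintro ⟨t, rfl⟩
          refine ⟨β₂*t + W/β₂, ?_⟩
          rw [hp₂]
          simp only
          have harg : (β₂*t + W/β₂)/β₂ - W/β₂^2 = t := by
            field_simp
            ring
          rw [harg]
      refine ⟨⟨p₁, hd11', ?_⟩, ⟨p₂, hd22', ?_⟩, ?_⟩
      · rw [him1, hrange1]
      · rw [him2, hrange2]
      · have hpar' := kl_parallel_of_param p₁ p₂ a' ha'0 hd11' hd22' hd12'
        rw [him1, him2, ← hrange1, ← hrange2]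
        exact hpar'
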